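/- arXiv:2309.00554 — 2 statements merged into one kernel-verified Lean document; each statement's English description precedes it below -/
import Mathlib

section
/- Let $t$ be a t-structure and $w$ a weight structure on the same triangulated category $\mathcal{C}$. Then the following are equivalent: (i) $\mathcal{C}^{t\leq 0} = \mathcal{C}_{w\leq 0}$ (left adjacency); (ii) $w$ is left orthogonal to $t$; (iii) $w$ is w-strictly left orthogonal to $t$; (iv) $w$ is t-strictly left orthogonal to $t$; (v) $w$ is w-t-strictly left orthogonal to $t$. -/
open CategoryTheory Limits Pretriangulated

namespace Paper

universe v u

variable {C : Type u} [Category.{v} C] [Preadditive C] [HasZeroObject C]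
  [HasShift C ℤ] [∀ n : ℤ, (shiftFunctor C n).Additive] [Pretriangulated C]

open CategoryTheory.Triangulated

/-- The right perpendicular of a class of objects. -/
def rPerp (T : Set C) : Set C := {Y | ∀ X ∈ T, ∀ f : X ⟶ Y, f = 0}

/-- The left perpendicular of a class of objects. -/
def lPerp (T : Set C) : Set C := {X | ∀ Y ∈ T, ∀ f : X ⟶ Y, f = 0}

/-- `S^{⊥_{>0}}`. -/
def perpGT (S : Set C) : Set C := {X | ∀ P ∈ S, ∀ m : ℤ, 0 < m → ∀ f : P ⟶ X⟦m⟧, f = 0}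

/-- `S^{⊥_{<0}}`. -/
def perpLT (S : Set C) : Set C := {X | ∀ P ∈ S, ∀ m : ℤ, m < 0 → ∀ f : P ⟶ X⟦m⟧, f = 0}

/-- The pair `(S^{⊥_{>0}}, S^{⊥_{<0}})` is the t-structure `t`. -/
def IsSiltingTStructureFor (S : Set C) (t : TStructure C) : Prop :=
  (∀ X : C, t.le 0 X ↔ X ∈ perpGT S) ∧ (∀ X : C, t.ge 0 X ↔ X ∈ perpLT S)

/-- `X` is a retract (direct summand) of `Y`. -/
def IsRetractOf (X Y : C) : Prop := ∃ (i : X ⟶ Y) (r : Y ⟶ X), i ≫ r = 𝟙 X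


/-- An indecomposable object: nonzero, and not a nontrivial biproduct. -/
def IndecObj {A : Type*} [Category A] [Limits.HasZeroMorphisms A]
    [HasBinaryBiproducts A] (X : A) : Prop :=
  ¬ IsZero X ∧ ∀ Y Z : A, Nonempty (X ≅ Y ⊞ Z) → IsZero Y ∨ IsZero Z

section Biprod
variable [HasFiniteBiproducts C]

/-- The Karoubi closure: direct summands of finite coproducts of objects of `S`. -/
def Kar (S : Set C) : Set C :=
  {X | ∃ (n : ℕ) (f : Fin n → C), (∀ i, f i ∈ S) ∧ IsRetractOf X (⨁ f)}

/-- A class of objects is Krull–Schmidt: every object is a finite biproduct of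
objects of the class with local endomorphism rings. -/
def KrullSchmidtOn (T : Set C) : Prop :=
  ∀ X ∈ T, ∃ (n : ℕ) (f : Fin n → C),
    (∀ i, f i ∈ T ∧ IsLocalRing (End (f i))) ∧ Nonempty (X ≅ ⨁ f)

/-- The category `C` is Krull–Schmidt. -/
def IsKrullSchmidt : Prop :=
  ∀ X : C, ∃ (n : ℕ) (f : Fin n → C),
    (∀ i, IsLocalRing (End (f i))) ∧ Nonempty (X ≅ ⨁ f)

/-- A silting collection: pairwise non-isomorphic indecomposables whose Karoubi
closure is Krull–Schmidt, such that the perpendicular pair is the t-structure `t`. -/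
structure IsSiltingCollection (S : Set C) (t : TStructure C) : Prop where
  indec : ∀ P ∈ S, IndecObj P
  pairwise_noniso : ∀ P ∈ S, ∀ Q ∈ S, P ≠ Q → IsEmpty (P ≅ Q)
  kar_ks : KrullSchmidtOn (Kar S)
  tstr : IsSiltingTStructureFor S t

end Biprod

/-- Derived projective objects with respect to a t-structure. -/
def IsDerivedProjective (t : TStructure C) (P : C) : Prop :=
  t.le 0 P ∧ ∀ (X : C), t.le 0 X → ∀ f : P ⟶ X⟦(1 : ℤ)⟧, f = 0

/-- The heart of a t-structure, as a class of objects. -/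
def heartSet (t : TStructure C) : Set C := {X | t.le 0 X ∧ t.ge 0 X}

/-- The heart of a t-structure, as a full subcategory. -/
abbrev Heart (t : TStructure C) := ObjectProperty.FullSubcategory (heartSet t)

instance (t : TStructure C) : Category (Heart t) := ObjectProperty.FullSubcategory.category _

instance (P : C → Prop) : Preadditive (ObjectProperty.FullSubcategory P) where
  homGroup X Y := InducedCategory.homEquiv.addCommGroup
  add_comp _ _ _ f f' g := by ext; exact Preadditive.add_comp _ _ _ f.hom f'.hom g.hom
  comp_add _ _ _ f g g' := by ext; exact Preadditive.comp_add _ _ _ f.hom g.hom g'.hom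

/-- Truncation data for a t-structure: the truncation functors `t_{≤0}` (right adjoint
to the inclusion of `D^{t≤0}`), `t_{≥0}` (left adjoint to the inclusion of `D^{t≥0}`),
and the zeroth cohomology functor `H = t_{≤0} ∘ t_{≥0}`. -/
structure TruncationData (t : TStructure C) where
  /-- the zeroth cohomology functor -/
  H : C ⥤ C
  H_heart : ∀ X : C, H.obj X ∈ heartSet t
  τle : C ⥤ C
  τleCounit : τle ⟶ 𝟭 C
  τle_mem : ∀ X : C, t.le 0 (τle.obj X)
  τle_fac : ∀ (X Z : C), t.le 0 Z → ∀ f : Z ⟶ X,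
    ∃! g : Z ⟶ τle.obj X, g ≫ τleCounit.app X = f
  τge : C ⥤ C
  τgeUnit : 𝟭 C ⟶ τge
  τge_mem : ∀ X : C, t.ge 0 (τge.obj X)
  τge_fac : ∀ (X Z : C), t.ge 0 Z → ∀ f : X ⟶ Z,
    ∃! g : τge.obj X ⟶ Z, τgeUnit.app X ≫ g = f
  H_eq : H = τge ⋙ τle

/-- The zeroth cohomology functor, valued in the heart. -/
def TruncationData.Hh {t : TStructure C} (TD : TruncationData t) : C ⥤ Heart t :=
  ObjectProperty.lift _ TD.H TD.H_heart

/-- A projective cover: an essential epimorphism from a projective object. -/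
def IsProjectiveCover {A : Type*} [Category A] {P X : A} (π : P ⟶ X) : Prop :=
  Projective P ∧ Epi π ∧ ∀ (R : A) (g : R ⟶ P), Epi (g ≫ π) → Epi g

/-- A derived projective cover of `X`. -/
def IsDerivedProjectiveCover {t : TStructure C} (TD : TruncationData t)
    {P X : C} (π : P ⟶ X) : Prop :=
  IsDerivedProjective t P ∧ IsProjectiveCover (TD.Hh.map π)

/-- A t-structure is non-degenerate. -/
def NonDegenerate (t : TStructure C) : Prop :=
  (∀ X : C, (∀ n : ℤ, t.le n X) → IsZero X) ∧ (∀ X : C, (∀ n : ℤ, t.ge n X) → IsZero X)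

/-- An object of a category has finite length: bounded chains of subobjects. -/
def FiniteLengthObj {A : Type*} [Category A] (X : A) : Prop :=
  ∃ n : ℕ, ∀ s : Fin (n + 1) → Subobject X, ¬ StrictMono s

/-- `D` has derived projectives: every projective of the heart is `H⁰` of a
derived projective. -/
def HasDerivedProjectives {t : TStructure C} (TD : TruncationData t) : Prop :=
  ∀ Q : Heart t, Projective Q → ∃ P : C, IsDerivedProjective t P ∧ Nonempty (TD.Hh.obj P ≅ Q)

/-- `D` has enough derived projectives. -/
def HasEnoughDerivedProjectives {t : TStructure C} (TD : TruncationData t) : Prop :=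
  EnoughProjectives (Heart t) ∧ HasDerivedProjectives TD

/-- The extension closure of a class of objects. -/
inductive ExtClos (T : Set C) : C → Prop
  | of {X : C} : X ∈ T → ExtClos T X
  | zero {X : C} : IsZero X → ExtClos T X
  | ext {A E B : C} (f : A ⟶ E) (g : E ⟶ B) (h : B ⟶ A⟦(1 : ℤ)⟧) :
      Triangle.mk f g h ∈ (distTriang C) → ExtClos T A → ExtClos T B → ExtClos T E

/-- The Karoubi (retract) closure of a class of objects. -/
def KarClos (T : Set C) : Set C := {X | ∃ Y ∈ T, IsRetractOf X Y}

/-- The triangulated subcategory generated by a class of objects. -/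
inductive TriaClos (T : Set C) : C → Prop
  | of {X : C} : X ∈ T → TriaClos T X
  | zero {X : C} : IsZero X → TriaClos T X
  | shift {X : C} (n : ℤ) : TriaClos T X → TriaClos T (X⟦n⟧)
  | ext {A E B : C} (f : A ⟶ E) (g : E ⟶ B) (h : B ⟶ A⟦(1 : ℤ)⟧) :
      Triangle.mk f g h ∈ (distTriang C) → TriaClos T A → TriaClos T B → TriaClos T E

/-- The thick subcategory generated by a class of objects. -/
inductive ThickClos (T : Set C) : C → Prop
  | of {X : C} : X ∈ T → ThickClos T X
  | zero {X : C} : IsZero X → ThickClos T X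
  | shift {X : C} (n : ℤ) : ThickClos T X → ThickClos T (X⟦n⟧)
  | ext {A E B : C} (f : A ⟶ E) (g : E ⟶ B) (h : B ⟶ A⟦(1 : ℤ)⟧) :
      Triangle.mk f g h ∈ (distTriang C) → ThickClos T A → ThickClos T B → ThickClos T E
  | retract {X Y : C} : IsRetractOf X Y → ThickClos T Y → ThickClos T X

/-- A thick subcategory, as a class of objects. -/
structure IsThickSet (T : Set C) : Prop where
  zero : ∀ X : C, IsZero X → X ∈ T
  shift : ∀ X ∈ T, ∀ n : ℤ, X⟦n⟧ ∈ T
  ext : ∀ (A E B : C) (f : A ⟶ E) (g : E ⟶ B) (h : B ⟶ A⟦(1 : ℤ)⟧),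
    Triangle.mk f g h ∈ (distTriang C) → A ∈ T → B ∈ T → E ∈ T
  retract : ∀ X Y : C, IsRetractOf X Y → Y ∈ T → X ∈ T

/-- A weight structure on the subcategory of `C` given by the class `CC`. -/
structure WeightStructureOn (CC : Set C) where
  le : Set C
  ge : Set C
  le_sub : le ⊆ CC
  ge_sub : ge ⊆ CC
  le_iso : ∀ X Y : C, (X ≅ Y) → X ∈ le → Y ∈ le
  ge_iso : ∀ X Y : C, (X ≅ Y) → X ∈ ge → Y ∈ ge
  le_retract : ∀ X Y : C, IsRetractOf X Y → Y ∈ le → X ∈ le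
  ge_retract : ∀ X Y : C, IsRetractOf X Y → Y ∈ ge → X ∈ ge
  le_shift : ∀ X ∈ le, X⟦(1 : ℤ)⟧ ∈ le
  ge_shift : ∀ X ∈ ge, X⟦(-1 : ℤ)⟧ ∈ ge
  orth : ∀ X : C, X⟦(1 : ℤ)⟧ ∈ ge → ∀ Y ∈ le, ∀ f : X ⟶ Y, f = 0
  decomp : ∀ X ∈ CC, ∃ (A B : C) (f : A ⟶ X) (g : X ⟶ B) (h : B ⟶ A⟦(1 : ℤ)⟧),
    Triangle.mk f g h ∈ (distTriang C) ∧ A⟦(1 : ℤ)⟧ ∈ ge ∧ B ∈ le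

namespace WeightStructureOn

variable {CC : Set C} (w : WeightStructureOn CC)

/-- `C_{w>0}`. -/
def gt : Set C := {X | X⟦(1 : ℤ)⟧ ∈ w.ge}

/-- `C_{w<0}`. -/
def lt : Set C := {X | X⟦(-1 : ℤ)⟧ ∈ w.le}

end WeightStructureOn


section AdjacencyAux

variable (t : TStructure C)

lemma t_le_of_perp (X : C) (hX : ∀ Z : C, t.ge 1 Z → ∀ f : X ⟶ Z, f = 0) :
    t.le 0 X := by
  obtain ⟨A, B, hA, hB, f, g, h, hdist⟩ := t.exists_triangle_zero_one X
  have hg : g = 0 := hX B hB g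
  obtain ⟨ψ, hψ⟩ := Triangle.yoneda_exact₃ _ hdist (𝟙 B)
    (show g ≫ 𝟙 B = 0 by rw [hg, zero_comp])
  have hψ0 : ψ = 0 := t.zero' ψ
    (t.le_monotone (show (-1:ℤ) ≤ 0 by omega) _ (t.le_shift 0 1 (-1) (by omega) A hA)) hB
  have hBzero : IsZero B := by
    rw [IsZero.iff_id_eq_zero, hψ, hψ0, comp_zero]; rfl
  have : IsIso f := (Triangle.isZero₃_iff_isIso₁ _ hdist).1 hBzero
  exact (t.le 0).prop_of_iso (asIso f) hA

lemma t_ge_of_perp (Y : C) (hY : ∀ Z : C, t.le 0 Z → ∀ f : Z ⟶ Y, f = 0) :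
    t.ge 1 Y := by
  obtain ⟨A, B, hA, hB, f, g, h, hdist⟩ := t.exists_triangle_zero_one Y
  have hf : f = 0 := hY A hA f
  obtain ⟨ψ, hψ⟩ := Triangle.coyoneda_exact₂ _ (inv_rot_of_distTriang _ hdist) (𝟙 A)
    (show 𝟙 A ≫ f = 0 by rw [hf, comp_zero])
  have hψ0 : ψ = 0 := t.zero' ψ hA
    (t.ge_antitone (show (1:ℤ) ≤ 2 by omega) _ (t.ge_shift 1 (-1) 2 (by omega) B hB))
  have hAzero : IsZero A := by
    rw [IsZero.iff_id_eq_zero, hψ, hψ0, zero_comp]; rfl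
  have : IsIso g := (Triangle.isZero₁_iff_isIso₂ _ hdist).1 hAzero
  exact (t.ge 1).prop_of_iso (asIso g).symm hB

variable (w : WeightStructureOn (Set.univ : Set C))

lemma w_le_of_perp (Y : C) (hY : ∀ Z : C, Z⟦(1:ℤ)⟧ ∈ w.ge → ∀ f : Z ⟶ Y, f = 0) :
    Y ∈ w.le := by
  obtain ⟨A, B, f, g, h, hdist, hA, hB⟩ := w.decomp Y (Set.mem_univ Y)
  have hf : f = 0 := hY A hA f
  obtain ⟨ψ, hψ⟩ := Triangle.yoneda_exact₂ _ hdist (𝟙 Y)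
    (show f ≫ 𝟙 Y = 0 by rw [hf, zero_comp])
  exact w.le_retract Y B ⟨g, ψ, hψ.symm⟩ hB

lemma w_ge_of_lperp
    (h2b : ∀ X ∈ w.le, ∀ Y : C, t.ge 1 Y → ∀ f : X ⟶ Y, f = 0)
    (X : C) (hX : ∀ Y : C, t.le (-1) Y → ∀ f : X ⟶ Y, f = 0) : X ∈ w.ge := by
  obtain ⟨A, B, f, g, h, hdist, hA, hB⟩ := w.decomp (X⟦(-1:ℤ)⟧) (Set.mem_univ _)
  have hBle : t.le 0 B := t_le_of_perp t B (fun Z hZ f => h2b B hB Z hZ f)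
  have hB1 : t.le (-1) (B⟦(1:ℤ)⟧) := t.le_shift 0 1 (-1) (by omega) B hBle
  set e : X ≅ (X⟦(-1:ℤ)⟧)⟦(1:ℤ)⟧ :=
    ((shiftFunctorCompIsoId C (-1:ℤ) (1:ℤ) (by omega)).app X).symm with he
  have hg1 : e.hom ≫ (shiftFunctor C (1:ℤ)).map g = 0 := hX _ hB1 _
  have hg : g = 0 := by
    apply (shiftFunctor C (1:ℤ)).map_injective
    rw [Functor.map_zero]
    calc (shiftFunctor C (1:ℤ)).map g
        = e.inv ≫ (e.hom ≫ (shiftFunctor C (1:ℤ)).map g) := by simp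
      _ = 0 := by rw [hg1, comp_zero]
  obtain ⟨r, hr⟩ : ∃ r : X⟦(-1:ℤ)⟧ ⟶ A, 𝟙 _ = r ≫ f := Triangle.coyoneda_exact₂ _ hdist (𝟙 (X⟦(-1:ℤ)⟧))
    (show 𝟙 _ ≫ g = 0 by rw [hg, comp_zero])
  have hr' : 𝟙 (X⟦(-1:ℤ)⟧) = r ≫ f := hr
  refine w.ge_retract X (A⟦(1:ℤ)⟧)
    ⟨e.hom ≫ (shiftFunctor C (1:ℤ)).map r, (shiftFunctor C (1:ℤ)).map f ≫ e.inv, ?_⟩ hA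
  rw [Category.assoc, ← Functor.map_comp_assoc, ← hr', CategoryTheory.Functor.map_id,
    Category.id_comp, e.hom_inv_id]

lemma w_le_of_tle
    (h2a : ∀ X ∈ w.ge, ∀ Y : C, t.le (-1) Y → ∀ f : X ⟶ Y, f = 0)
    (X : C) (hX : t.le 0 X) : X ∈ w.le := by
  apply w_le_of_perp w X
  intro Z hZ f
  apply (shiftFunctor C (1:ℤ)).map_injective
  rw [Functor.map_zero]
  exact h2a _ hZ _ (t.le_shift 0 1 (-1) (by omega) X hX) _

end AdjacencyAux

/-- for a weight structure and a t-structure on the same triangulated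
category, left adjacency and all strictness levels of left orthogonality coincide. -/
theorem adjacency_lemma (w : WeightStructureOn (Set.univ : Set C)) (t : TStructure C) :
    List.TFAE [
      {X : C | t.le 0 X} = w.le,
      (∀ X ∈ w.ge, ∀ Y : C, t.le (-1) Y → ∀ f : X ⟶ Y, f = 0) ∧
        (∀ X ∈ w.le, ∀ Y : C, t.ge 1 Y → ∀ f : X ⟶ Y, f = 0),
      w.ge = lPerp {Y : C | t.le (-1) Y} ∧ w.le = lPerp {Y : C | t.ge 1 Y},
      {Y : C | t.le (-1) Y} = rPerp w.ge ∧ {Y : C | t.ge 1 Y} = rPerp w.le,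
      (w.ge = lPerp {Y : C | t.le (-1) Y} ∧ w.le = lPerp {Y : C | t.ge 1 Y}) ∧
        ({Y : C | t.le (-1) Y} = rPerp w.ge ∧ {Y : C | t.ge 1 Y} = rPerp w.le)]  := by
  tfae_have h12 : 1 → 2 := by
    intro h
    constructor
    · intro X hX Y hY f
      have hY' : Y⟦(-1:ℤ)⟧ ∈ w.le := by
        rw [← h]; exact t.le_shift (-1) (-1) 0 (by omega) Y hY
      have hX' : (X⟦(-1:ℤ)⟧)⟦(1:ℤ)⟧ ∈ w.ge :=
        w.ge_iso X _ (((shiftFunctorCompIsoId C (-1:ℤ) (1:ℤ) (by omega)).app X).symm) hX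
      have h0 := w.orth (X⟦(-1:ℤ)⟧) hX' (Y⟦(-1:ℤ)⟧) hY' ((shiftFunctor C (-1:ℤ)).map f)
      exact (shiftFunctor C (-1:ℤ)).map_injective (by rw [h0, Functor.map_zero])
    · intro X hX Y hY f
      have hX' : t.le 0 X := by rw [← h] at hX; exact hX
      exact t.zero' f hX' hY
  tfae_have h21 : 2 → 1 := by
    intro h
    ext X
    exact ⟨fun hX => w_le_of_tle t w h.1 X hX,
      fun hX => t_le_of_perp t X (fun Z hZ f => h.2 X hX Z hZ f)⟩
  tfae_have h23 : 2 → 3 := by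
    intro h
    constructor
    · ext X
      exact ⟨fun hX Y hY f => h.1 X hX Y hY f, fun hX => w_ge_of_lperp t w h.2 X hX⟩
    · ext X
      exact ⟨fun hX Y hY f => h.2 X hX Y hY f,
        fun hX => w_le_of_tle t w h.1 X (t_le_of_perp t X (fun Z hZ f => hX Z hZ f))⟩
  tfae_have h32 : 3 → 2 := by
    intro h
    constructor
    · intro X hX Y hY f
      rw [h.1] at hX
      exact hX Y hY f
    · intro X hX Y hY f
      rw [h.2] at hX
      exact hX Y hY f
  tfae_have h24 : 2 → 4 := by
    intro h
    have h1 : {X : C | t.le 0 X} = w.le := by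
      ext X
      exact ⟨fun hX => w_le_of_tle t w h.1 X hX,
        fun hX => t_le_of_perp t X (fun Z hZ f => h.2 X hX Z hZ f)⟩
    constructor
    · ext Y
      constructor
      · intro hY X hX f
        exact h.1 X hX Y hY f
      · intro hY
        have hle : Y⟦(-1:ℤ)⟧ ∈ w.le := by
          apply w_le_of_perp w
          intro Z hZ f
          have h0 := hY (Z⟦(1:ℤ)⟧) hZ ((shiftFunctor C (1:ℤ)).map f ≫
            ((shiftFunctorCompIsoId C (-1:ℤ) (1:ℤ) (by omega)).app Y).hom)
          apply (shiftFunctor C (1:ℤ)).map_injective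
          rw [Functor.map_zero]
          calc (shiftFunctor C (1:ℤ)).map f
              = ((shiftFunctor C (1:ℤ)).map f ≫
                  ((shiftFunctorCompIsoId C (-1:ℤ) (1:ℤ) (by omega)).app Y).hom) ≫
                  ((shiftFunctorCompIsoId C (-1:ℤ) (1:ℤ) (by omega)).app Y).inv := by simp
            _ = 0 := by rw [h0, zero_comp]
        have hle' : t.le 0 (Y⟦(-1:ℤ)⟧) := by rw [← h1] at hle; exact hle
        have h3 : t.le (-1) ((Y⟦(-1:ℤ)⟧)⟦(1:ℤ)⟧) := t.le_shift 0 1 (-1) (by omega) _ hle'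
        exact (t.le (-1)).prop_of_iso
          ((shiftFunctorCompIsoId C (-1:ℤ) (1:ℤ) (by omega)).app Y) h3
    · ext Y
      constructor
      · intro hY X hX f
        exact h.2 X hX Y hY f
      · intro hY
        exact t_ge_of_perp t Y (fun Z hZ f =>
          hY Z (show Z ∈ w.le by rw [← h1]; exact hZ) f)
  tfae_have h42 : 4 → 2 := by
    intro h
    constructor
    · intro X hX Y hY f
      have hY' : Y ∈ rPerp w.ge := by rw [← h.1]; exact hY
      exact hY' X hX f
    · intro X hX Y hY f
      have hY' : Y ∈ rPerp w.le := by rw [← h.2]; exact hY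
      exact hY' X hX f
  tfae_have h25 : 2 → 5 := fun h => ⟨h23 h, h24 h⟩
  tfae_have h53 : 5 → 3 := fun h => h.1
  tfae_finish

end Paper
end

section
/- Let $\mathcal{D}$ be a triangulated category with t-structure $t$ such that $\mathcal{D}$ has enough derived projectives with respect to $t$. Then for every $X \in \mathcal{D}^{t\leq 0}$ there is a morphism $\hat{\pi} \colon \hat{P} \to X$ with $\hat{P}$ derived projective which is a right $\mathrm{DProj}_t(\mathcal{D})$-approximation of $X$: every morphism $P' \to X$ with $P'$ derived projective factors through $\hat{\pi}$. -/
open CategoryTheory Limits Pretriangulated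

namespace Paper

universe v u

variable {C : Type u} [Category.{v} C] [Preadditive C] [HasZeroObject C]
  [HasShift C ℤ] [∀ n : ℤ, (shiftFunctor C n).Additive] [Pretriangulated C]

open CategoryTheory.Triangulated

instance (t : TStructure C) : Category.{v} (Heart t) := ObjectProperty.FullSubcategory.category _

section Aux

/-- Orthogonality for a t-structure: no nonzero maps from `LE a` to `GE b` when `a < b`. -/
lemma homZero (t : TStructure C) {a b : ℤ} (hab : a < b) {X Y : C}
    (hX : t.le a X) (hY : t.ge b Y) (f : X ⟶ Y) : f = 0 := by
  have hX' : t.le 0 (X⟦a⟧) := t.le_shift a a 0 (by omega) X hX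
  have hY' : t.ge (b - a) (Y⟦a⟧) := t.ge_shift b a (b - a) (by omega) Y hY
  have hY'' : t.ge 1 (Y⟦a⟧) := t.ge_antitone (by omega : (1:ℤ) ≤ b - a) _ hY'
  have h0 : (shiftFunctor C a).map f = 0 := t.zero' _ hX' hY''
  apply (shiftFunctor C a).map_injective
  rw [h0, Functor.map_zero]

/-- The class `LE n` is closed under extensions. -/
lemma LE_ext (t : TStructure C) {T : Triangle C} (hT : T ∈ distTriang C) {n : ℤ}
    (h₁ : t.le n T.obj₁) (h₃ : t.le n T.obj₃) : t.le n T.obj₂ := by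
  obtain ⟨A, B, hA, hB, a, b, c, mem⟩ := t.exists_triangle T.obj₂ n (n + 1) rfl
  have hb1 : T.mor₁ ≫ b = 0 := homZero t (lt_add_one n) h₁ hB _
  obtain ⟨g, hg⟩ := Triangle.yoneda_exact₂ T hT b hb1
  have hb : b = 0 := by rw [hg, homZero t (lt_add_one n) h₃ hB g, comp_zero]
  have hBzero : IsZero B := by
    obtain ⟨v, hv⟩ := Triangle.yoneda_exact₃ _ mem (𝟙 B)
      (by change b ≫ 𝟙 B = 0; rw [hb, zero_comp])
    rw [Limits.IsZero.iff_id_eq_zero]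
    rw [hv, homZero t (show n - 1 < n + 1 by omega)
      (t.le_shift n 1 (n - 1) (by omega) A hA) hB v]; exact comp_zero
  have : IsIso a := by
    have := (Triangle.isZero₃_iff_isIso₁ _ mem).1 hBzero
    exact this
  exact (t.le n).prop_of_iso (asIso a) hA

/-- A derived projective admits no nonzero map to an object of `LE (-1)`. -/
lemma dp_homZero (t : TStructure C) {P W : C} (hP : IsDerivedProjective t P)
    (hW : t.le (-1) W) (f : P ⟶ W) : f = 0 := by
  have h1 : t.le 0 (W⟦(-1 : ℤ)⟧) := t.le_shift (-1) (-1) 0 (by omega) W hW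
  have e := (shiftFunctorCompIsoId C (-1 : ℤ) (1 : ℤ) (by omega)).app W
  have h0 : f ≫ e.inv = 0 := hP.2 _ h1 _
  have := congrArg (fun g => g ≫ e.hom) h0
  simpa using this

/-- If `Z` is in `LE 0`, the counit `τle Z ⟶ Z` is an isomorphism. -/
lemma counit_isIso {t : TStructure C} (TD : TruncationData t) (Z : C) (hZ : t.le 0 Z) :
    IsIso (TD.τleCounit.app Z) := by
  obtain ⟨s, hs, -⟩ := TD.τle_fac Z Z hZ (𝟙 Z)
  obtain ⟨g, -, huniq⟩ := TD.τle_fac Z (TD.τle.obj Z) (TD.τle_mem Z) (TD.τleCounit.app Z)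
  refine ⟨s, ?_, hs⟩
  have h1 : TD.τleCounit.app Z ≫ s = g := huniq _ (by beta_reduce; rw [Category.assoc, hs]; simp)
  have h2 : 𝟙 (TD.τle.obj Z) = g := huniq _ (by beta_reduce; rw [Category.id_comp])
  rw [h1, ← h2]

/-- For `X` in `LE 0`: `τge X` is in `LE 0`, and maps from a derived projective to `τge X`
lift along the unit `X ⟶ τge X`. -/
lemma tge_facts (t : TStructure C) (TD : TruncationData t) (X : C) (hX : t.le 0 X) :
    t.le 0 (TD.τge.obj X) ∧
      ∀ (P : C), IsDerivedProjective t P → ∀ h : P ⟶ TD.τge.obj X,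
        ∃ π : P ⟶ X, π ≫ TD.τgeUnit.app X = h := by
  obtain ⟨A, B, hA, hB0, a, q, r, mem⟩ := t.exists_triangle X (-1) 0 (by omega)
  have hB : t.ge 0 B := hB0
  have hA1 : t.le (-2) (A⟦(1 : ℤ)⟧) := t.le_shift (-1) 1 (-2) (by omega) A hA
  have hBLE : t.le 0 B := by
    refine LE_ext t (rot_of_distTriang _ mem) ?_ ?_
    · exact hX
    · exact t.le_monotone (show (-2 : ℤ) ≤ 0 by omega) _ hA1
  -- compare B with τge X
  have haη : a ≫ TD.τgeUnit.app X = 0 :=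
    homZero t (show (-1 : ℤ) < 0 by omega) hA (TD.τge_mem X) _
  obtain ⟨θ'0, hθ'0⟩ := Triangle.yoneda_exact₂ _ mem (TD.τgeUnit.app X) haη
  have hθ' : TD.τgeUnit.app X = q ≫ θ'0 := hθ'0
  set θ' : B ⟶ TD.τge.obj X := θ'0 with hsetθ'
  obtain ⟨θ, hθ, -⟩ := TD.τge_fac X B hB q
  have hBB : ∀ u : B ⟶ B, q ≫ u = q → u = 𝟙 B := by
    intro u hu
    have h0 : q ≫ (u - 𝟙 B) = 0 := by
      rw [Preadditive.comp_sub, hu, Category.comp_id, sub_self]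
    obtain ⟨v, hv⟩ := Triangle.yoneda_exact₃ _ mem _ h0
    have hv0 : v = 0 := homZero t (show (-2 : ℤ) < 0 by omega) hA1 hB v
    have : u - 𝟙 B = 0 := by rw [hv, hv0]; exact comp_zero
    rwa [sub_eq_zero] at this
  have hθθ' : θ ≫ θ' = 𝟙 (TD.τge.obj X) := by
    obtain ⟨g, -, huniq⟩ := TD.τge_fac X (TD.τge.obj X) (TD.τge_mem X) (TD.τgeUnit.app X)
    have h1 : θ ≫ θ' = g := huniq _ (by beta_reduce; rw [← Category.assoc, hθ, ← hθ'])
    have h2 : 𝟙 (TD.τge.obj X) = g := huniq _ (by beta_reduce; rw [Category.comp_id])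
    rw [h1, ← h2]
  have hθ'θ : θ' ≫ θ = 𝟙 B := by
    refine hBB _ ?_
    rw [← Category.assoc, ← hθ', hθ]
  constructor
  · exact (t.le 0).prop_of_iso (Iso.mk θ' θ hθ'θ hθθ') hBLE
  · intro P hP h
    have hmr : (h ≫ θ) ≫ r = 0 :=
      hP.2 A (t.le_monotone (show (-1:ℤ) ≤ 0 by omega) _ hA) _
    obtain ⟨π, hπ0⟩ : ∃ π : P ⟶ X, h ≫ θ = π ≫ q := Triangle.coyoneda_exact₃ _ mem (h ≫ θ) hmr
    have hπ : h ≫ θ = π ≫ q := hπ0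
    refine ⟨π, ?_⟩
    have h1 : (π ≫ TD.τgeUnit.app X) ≫ θ = h ≫ θ := by
      rw [Category.assoc, hθ, ← hπ]
    calc π ≫ TD.τgeUnit.app X
        = ((π ≫ TD.τgeUnit.app X) ≫ θ) ≫ θ' := by rw [Category.assoc, hθθ', Category.comp_id]
      _ = (h ≫ θ) ≫ θ' := by rw [h1]
      _ = h := by rw [Category.assoc, hθθ', Category.comp_id]

end Aux

/-- if `D` has enough derived projectives, then every object of
`D^{t≤0}` admits a right `DProj`-approximation by a derived projective. -/
theorem enough_derivedProjectives_approximation (t : TStructure C)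
    (TD : TruncationData t) (hED : HasEnoughDerivedProjectives TD)
    (X : C) (hX : t.le 0 X) :
    ∃ (P : C) (π : P ⟶ X), IsDerivedProjective t P ∧
      ∀ (P' : C), IsDerivedProjective t P' → ∀ f : P' ⟶ X,
        ∃ g : P' ⟶ P, g ≫ π = f := by
  obtain ⟨hEP, hDP⟩ := hED
  have hmemX : heartSet t (TD.τle.obj (TD.τge.obj X)) := by
    have h := TD.H_heart X; rw [TD.H_eq] at h; exact h
  -- projective presentation of H⁰X in the heart
  obtain ⟨pres⟩ := hEP.presentation (⟨TD.τle.obj (TD.τge.obj X), hmemX⟩ : Heart t)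
  -- realize the projective as H⁰ of a derived projective
  obtain ⟨P, hPdp, ⟨ι⟩⟩ := hDP pres.p pres.projective
  have hmemP : heartSet t (TD.τle.obj (TD.τge.obj P)) := by
    have h := TD.H_heart P; rw [TD.H_eq] at h; exact h
  have mkEq : ∀ (a b : C) (ha : heartSet t a) (hb : heartSet t b), a = b →
      (⟨a, ha⟩ : Heart t) = ⟨b, hb⟩ := by rintro a b ha hb rfl; rfl
  have hobjP : (⟨TD.τle.obj (TD.τge.obj P), hmemP⟩ : Heart t) = TD.Hh.obj P :=
    mkEq _ _ _ _ (Functor.congr_obj TD.H_eq P).symm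
  -- an "epimorphism" eC : H⁰P ⟶ H⁰X, packaged with its cancellation property
  obtain ⟨eC, heCancel⟩ :
      ∃ e : TD.τle.obj (TD.τge.obj P) ⟶ TD.τle.obj (TD.τge.obj X),
        ∀ (B : C) (hB : heartSet t B) (ψ : TD.τle.obj (TD.τge.obj X) ⟶ B),
          e ≫ ψ = 0 → ψ = 0 := by
    haveI := pres.epi
    haveI := pres.projective
    have hepi : Epi (eqToHom hobjP ≫ ι.hom ≫ pres.f) := epi_comp _ _
    refine ⟨(show (⟨TD.τle.obj (TD.τge.obj P), hmemP⟩ : Heart t) ⟶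
        (⟨TD.τle.obj (TD.τge.obj X), hmemX⟩ : Heart t) from eqToHom hobjP ≫ ι.hom ≫ pres.f).hom, ?_⟩
    intro B hB ψ h0
    letI : Preadditive (Heart t) :=
      (inferInstance : ∀ P : C → Prop, Preadditive (ObjectProperty.FullSubcategory P)) (heartSet t)
    exact congrArg InducedCategory.Hom.hom ((Preadditive.epi_iff_cancel_zero _).1 hepi ⟨B, hB⟩
      (show (⟨TD.τle.obj (TD.τge.obj X), hmemX⟩ : Heart t) ⟶ (⟨B, hB⟩ : Heart t) from ObjectProperty.homMk ψ)
      (by apply ObjectProperty.hom_ext; exact h0))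
  -- the counits on τge P and τge X are isomorphisms
  have hτgeP_LE : t.le 0 (TD.τge.obj P) := (tge_facts t TD P hPdp.1).1
  have hτgeX_LE : t.le 0 (TD.τge.obj X) := (tge_facts t TD X hX).1
  haveI := counit_isIso TD _ hτgeP_LE
  haveI := counit_isIso TD _ hτgeX_LE
  -- construct π : P ⟶ X realizing eC
  obtain ⟨π, hπ⟩ := (tge_facts t TD X hX).2 P hPdp
    ((TD.τgeUnit.app P ≫ inv (TD.τleCounit.app (TD.τge.obj P))) ≫ eC ≫
      TD.τleCounit.app (TD.τge.obj X))
  have hnat : TD.τgeUnit.app P ≫ TD.τge.map π = π ≫ TD.τgeUnit.app X := by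
    simpa using (TD.τgeUnit.naturality π).symm
  obtain ⟨g0, hg0, hg0u⟩ := TD.τge_fac P (TD.τge.obj X) (TD.τge_mem X) (π ≫ TD.τgeUnit.app X)
  have e1 : TD.τge.map π = g0 := hg0u _ hnat
  have e2 : inv (TD.τleCounit.app (TD.τge.obj P)) ≫ eC ≫ TD.τleCounit.app (TD.τge.obj X) = g0 :=
    hg0u _ (by beta_reduce; rw [hπ]; simp only [Category.assoc])
  have key : TD.τleCounit.app (TD.τge.obj P) ≫ TD.τge.map π =
      eC ≫ TD.τleCounit.app (TD.τge.obj X) := by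
    rw [e1, ← e2, IsIso.hom_inv_id_assoc]
  -- complete π to a triangle
  obtain ⟨W, w, δ, hTw⟩ := Pretriangulated.distinguished_cocone_triangle π
  have hP1 : t.le (-1) (P⟦(1 : ℤ)⟧) := t.le_shift 0 1 (-1) (by omega) P hPdp.1
  have hW_LE : t.le 0 W := by
    refine LE_ext t (rot_of_distTriang _ hTw) ?_ ?_
    · exact hX
    · exact t.le_monotone (show (-1 : ℤ) ≤ 0 by omega) _ hP1
  -- decompose W
  obtain ⟨A₂, B₂, hA₂, hB₂, a₂, b₂, c₂, mem₂⟩ := t.exists_triangle W (-1) 0 (by omega)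
  have hA₂1 : t.le (-2) (A₂⟦(1 : ℤ)⟧) := t.le_shift (-1) 1 (-2) (by omega) A₂ hA₂
  have hB₂LE : t.le 0 B₂ := by
    refine LE_ext t (rot_of_distTriang _ mem₂) ?_ ?_
    · exact hW_LE
    · exact t.le_monotone (show (-2 : ℤ) ≤ 0 by omega) _ hA₂1
  have hB₂heart : heartSet t B₂ := ⟨hB₂LE, hB₂⟩
  obtain ⟨ξ, hξ, -⟩ := TD.τge_fac X B₂ hB₂ (w ≫ b₂)
  have hπw : π ≫ w = 0 := comp_distTriang_mor_zero₁₂ _ hTw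
  -- τge.map π ≫ ξ = 0
  obtain ⟨z0, hz0, hz0u⟩ := TD.τge_fac P B₂ hB₂ 0
  have t1 : TD.τge.map π ≫ ξ = 0 := by
    have ha : TD.τgeUnit.app P ≫ TD.τge.map π ≫ ξ = 0 := by
      rw [← Category.assoc, hnat, Category.assoc, hξ, ← Category.assoc, hπw, zero_comp]
    have hz1 : TD.τge.map π ≫ ξ = z0 := hz0u _ ha
    have hz2 : (0 : TD.τge.obj P ⟶ B₂) = z0 := hz0u 0 (by beta_reduce; rw [comp_zero])
    exact hz1.trans hz2.symm
  have t2 : eC ≫ TD.τleCounit.app (TD.τge.obj X) ≫ ξ = 0 := by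
    rw [← Category.assoc, ← key, Category.assoc, t1, comp_zero]
  -- use the epi property in the heart
  have hC0 : TD.τleCounit.app (TD.τge.obj X) ≫ ξ = 0 :=
    heCancel B₂ hB₂heart (TD.τleCounit.app (TD.τge.obj X) ≫ ξ) t2
  have hξ0 : ξ = 0 :=
    (cancel_epi (TD.τleCounit.app (TD.τge.obj X))).1 (by rw [hC0, comp_zero])
  have hx0 : w ≫ b₂ = 0 := by rw [← hξ, hξ0, comp_zero]
  -- b₂ = 0
  have hb₂0 : b₂ = 0 := by
    obtain ⟨v, hv⟩ := Triangle.yoneda_exact₃ _ hTw b₂ hx0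
    rw [hv, homZero t (show (-1 : ℤ) < 0 by omega) hP1 hB₂ v]; exact comp_zero
  -- B₂ is zero
  have hB₂zero : IsZero B₂ := by
    obtain ⟨v, hv⟩ := Triangle.yoneda_exact₃ _ mem₂ (𝟙 B₂) (by change b₂ ≫ 𝟙 B₂ = 0; rw [hb₂0]; exact zero_comp)
    rw [Limits.IsZero.iff_id_eq_zero, hv,
      homZero t (show (-2 : ℤ) < 0 by omega) hA₂1 hB₂ v]; exact comp_zero
  -- hence W is ≤ -1
  have hW1 : t.le (-1) W := by
    have ha₂ : IsIso a₂ := by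
      have := (Triangle.isZero₃_iff_isIso₁ _ mem₂).1 hB₂zero
      exact this
    exact (t.le (-1)).prop_of_iso (asIso a₂) hA₂
  -- conclude
  refine ⟨P, π, hPdp, ?_⟩
  intro P' hP' f
  have hfw : f ≫ w = 0 := dp_homZero t hP' hW1 _
  obtain ⟨g, hg⟩ := Triangle.coyoneda_exact₂ _ hTw f hfw
  exact ⟨g, hg.symm⟩

end Paper
end
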